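/- Let {{−,−}} be a 2-fold bracket on V satisfying the skewsymmetry {{a,b}} = −({{b,a}})^σ. Define {{a,b,c}} := {{a, {{b,c}} }}_L + ({{b, {{c,a}} }}_L)^σ + ({{c, {{a,b}} }}_L)^{σ²} ∈ V^{⊗3}. Then {{−,−,−}} is a 3-fold bracket on V; that is, for all a,b,c,x,y ∈ V: {{xy,b,c}} = x ⋆₁ {{y,b,c}} + {{x,b,c}} ⋆₂ y; {{a,xy,c}} = x ⋆₂ {{a,y,c}} + {{a,x,c}} ⋆₁ y; and {{a,b,xy}} = x·{{a,b,y}} + {{a,b,x}}·y (outer bimodule action on V^{⊗3}). -/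

import Mathlib

open TensorProduct LinearMap

section DPA

variable (𝔽 : Type) [Field 𝔽] (V : Type) [Ring V] [Algebra 𝔽 V]

/-- The swap `(u ⊗ v)^σ = v ⊗ u` on `V ⊗ V`. -/
noncomputable abbrev swap2 : V ⊗[𝔽] V ≃ₗ[𝔽] V ⊗[𝔽] V := TensorProduct.comm 𝔽 V V

/-- The cyclic permutation `(u ⊗ v ⊗ w)^σ = w ⊗ u ⊗ v` on `V ⊗ V ⊗ V = (V ⊗ V) ⊗ V`. -/
noncomputable def sigma3 : (V ⊗[𝔽] V) ⊗[𝔽] V ≃ₗ[𝔽] (V ⊗[𝔽] V) ⊗[𝔽] V :=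
  (TensorProduct.comm 𝔽 (V ⊗[𝔽] V) V).trans (TensorProduct.assoc 𝔽 V V V).symm

/-- Left multiplication `a · (u ⊗ v) = (a*u) ⊗ v` (outer bimodule structure). -/
noncomputable def lact2 (a : V) : V ⊗[𝔽] V →ₗ[𝔽] V ⊗[𝔽] V :=
  LinearMap.rTensor V (LinearMap.mulLeft 𝔽 a)

/-- Right multiplication `(u ⊗ v) · c = u ⊗ (v*c)` (outer bimodule structure). -/
noncomputable def ract2 (c : V) : V ⊗[𝔽] V →ₗ[𝔽] V ⊗[𝔽] V :=
  LinearMap.lTensor V (LinearMap.mulRight 𝔽 c)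

/-- `(u ⊗ v) ⋆₁ b = (u*b) ⊗ v`. -/
noncomputable def star1r (b : V) : V ⊗[𝔽] V →ₗ[𝔽] V ⊗[𝔽] V :=
  LinearMap.rTensor V (LinearMap.mulRight 𝔽 b)

/-- `a ⋆₁ (u ⊗ v) = u ⊗ (a*v)`. -/
noncomputable def star1l (a : V) : V ⊗[𝔽] V →ₗ[𝔽] V ⊗[𝔽] V :=
  LinearMap.lTensor V (LinearMap.mulLeft 𝔽 a)

/-- The `•`-product on `V ⊗ V`:  `(u ⊗ v) • (x ⊗ y) = (u*x) ⊗ (y*v)`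
(the multiplication of `V ⊗ Vᵒᵖ`). -/
noncomputable def bullet : V ⊗[𝔽] V →ₗ[𝔽] V ⊗[𝔽] V →ₗ[𝔽] V ⊗[𝔽] V :=
  TensorProduct.lift
    (((TensorProduct.mapBilinear (RingHom.id 𝔽) V V V V).comp (LinearMap.mul 𝔽 V)).compl₂
      ((LinearMap.mul 𝔽 V).flip))

/-- A `2`-fold bracket on `V`: an `𝔽`-bilinear map `V × V → V ⊗ V` satisfying the two
Leibniz rules `{{a,bc}} = {{a,b}}·c + b·{{a,c}}` and `{{ab,c}} = {{a,c}} ⋆₁ b + a ⋆₁ {{b,c}}`. -/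
def IsDoubleBracket (Br : V →ₗ[𝔽] V →ₗ[𝔽] V ⊗[𝔽] V) : Prop :=
  (∀ a b c : V, Br a (b * c) = ract2 𝔽 V c (Br a b) + lact2 𝔽 V b (Br a c)) ∧
  (∀ a b c : V, Br (a * b) c = star1r 𝔽 V b (Br a c) + star1l 𝔽 V a (Br b c))

variable {𝔽 V}

/-- `{{a, B}}_L` : apply the bracket to the first tensor factor. -/
noncomputable def brL (Br : V →ₗ[𝔽] V →ₗ[𝔽] V ⊗[𝔽] V) (a : V) :
    V ⊗[𝔽] V →ₗ[𝔽] (V ⊗[𝔽] V) ⊗[𝔽] V :=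
  LinearMap.rTensor V (Br a)

/-- `{{a, B}}_R` : apply the bracket to the second tensor factor. -/
noncomputable def brR (Br : V →ₗ[𝔽] V →ₗ[𝔽] V ⊗[𝔽] V) (a : V) :
    V ⊗[𝔽] V →ₗ[𝔽] (V ⊗[𝔽] V) ⊗[𝔽] V :=
  (TensorProduct.assoc 𝔽 V V V).symm.toLinearMap ∘ₗ LinearMap.lTensor V (Br a)

variable (𝔽 V)

/-- `ρ₂` : swap the last two tensor factors of `V ⊗ V ⊗ V`. -/
noncomputable def rho2 : (V ⊗[𝔽] V) ⊗[𝔽] V ≃ₗ[𝔽] (V ⊗[𝔽] V) ⊗[𝔽] V :=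
  (TensorProduct.assoc 𝔽 V V V).trans
    ((TensorProduct.congr (LinearEquiv.refl 𝔽 V) (TensorProduct.comm 𝔽 V V)).trans
      (TensorProduct.assoc 𝔽 V V V).symm)

variable {𝔽 V}

/-- Conjugated bullet action used to define the actions `•ᵢ` of `V ⊗ V` on `V ⊗ V ⊗ V`. -/
noncomputable def conjAct (β : V ⊗[𝔽] V →ₗ[𝔽] V ⊗[𝔽] V →ₗ[𝔽] V ⊗[𝔽] V)
    (ρ : (V ⊗[𝔽] V) ⊗[𝔽] V ≃ₗ[𝔽] (V ⊗[𝔽] V) ⊗[𝔽] V) :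
    V ⊗[𝔽] V →ₗ[𝔽] (V ⊗[𝔽] V) ⊗[𝔽] V →ₗ[𝔽] (V ⊗[𝔽] V) ⊗[𝔽] V :=
  (LinearMap.lcomp 𝔽 _ ρ.toLinearMap) ∘ₗ
    (LinearMap.llcomp 𝔽 ((V ⊗[𝔽] V) ⊗[𝔽] V) ((V ⊗[𝔽] V) ⊗[𝔽] V) ((V ⊗[𝔽] V) ⊗[𝔽] V)
      ρ.symm.toLinearMap) ∘ₗ
    (LinearMap.rTensorHom V) ∘ₗ β

variable (𝔽 V)

/-- The right action `X •₁ A`, i.e. `(x⊗y⊗z) •₁ (a⊗b) = x⊗(y*a)⊗(b*z)`;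
`bAct1R A X = X •₁ A`. -/
noncomputable def bAct1R : V ⊗[𝔽] V →ₗ[𝔽] (V ⊗[𝔽] V) ⊗[𝔽] V →ₗ[𝔽] (V ⊗[𝔽] V) ⊗[𝔽] V :=
  conjAct (bullet 𝔽 V).flip ((sigma3 𝔽 V).trans (sigma3 𝔽 V))

/-- The left action `A •₂ X`, i.e. `(a⊗b) •₂ (x⊗y⊗z) = (a*x)⊗y⊗(z*b)`. -/
noncomputable def bAct2L : V ⊗[𝔽] V →ₗ[𝔽] (V ⊗[𝔽] V) ⊗[𝔽] V →ₗ[𝔽] (V ⊗[𝔽] V) ⊗[𝔽] V :=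
  conjAct (bullet 𝔽 V) (rho2 𝔽 V)

/-- The right action `X •₃ A`, i.e. `(x⊗y⊗z) •₃ (a⊗b) = (x*a)⊗(b*y)⊗z`;
`bAct3R A X = X •₃ A`. -/
noncomputable def bAct3R : V ⊗[𝔽] V →ₗ[𝔽] (V ⊗[𝔽] V) ⊗[𝔽] V →ₗ[𝔽] (V ⊗[𝔽] V) ⊗[𝔽] V :=
  conjAct (bullet 𝔽 V).flip (LinearEquiv.refl 𝔽 ((V ⊗[𝔽] V) ⊗[𝔽] V))

/-- `a ⋆₁ (x⊗y⊗z) = x⊗(a*y)⊗z`. -/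
noncomputable def slot2L (a : V) : (V ⊗[𝔽] V) ⊗[𝔽] V →ₗ[𝔽] (V ⊗[𝔽] V) ⊗[𝔽] V :=
  LinearMap.rTensor V (LinearMap.lTensor V (LinearMap.mulLeft 𝔽 a))

/-- `(x⊗y⊗z) ⋆₁ b = x⊗(y*b)⊗z`. -/
noncomputable def slot2R (b : V) : (V ⊗[𝔽] V) ⊗[𝔽] V →ₗ[𝔽] (V ⊗[𝔽] V) ⊗[𝔽] V :=
  LinearMap.rTensor V (LinearMap.lTensor V (LinearMap.mulRight 𝔽 b))

/-- `a ⋆₂ (x⊗y⊗z) = x⊗y⊗(a*z)`. -/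
noncomputable def slot3L (a : V) : (V ⊗[𝔽] V) ⊗[𝔽] V →ₗ[𝔽] (V ⊗[𝔽] V) ⊗[𝔽] V :=
  LinearMap.lTensor (V ⊗[𝔽] V) (LinearMap.mulLeft 𝔽 a)

/-- `(x⊗y⊗z) ⋆₂ b = (x*b)⊗y⊗z`. -/
noncomputable def slot1R (b : V) : (V ⊗[𝔽] V) ⊗[𝔽] V →ₗ[𝔽] (V ⊗[𝔽] V) ⊗[𝔽] V :=
  LinearMap.rTensor V (LinearMap.rTensor V (LinearMap.mulRight 𝔽 b))

/-- outer left: `a · (x⊗y⊗z) = (a*x)⊗y⊗z`. -/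
noncomputable def slot1L (a : V) : (V ⊗[𝔽] V) ⊗[𝔽] V →ₗ[𝔽] (V ⊗[𝔽] V) ⊗[𝔽] V :=
  LinearMap.rTensor V (LinearMap.rTensor V (LinearMap.mulLeft 𝔽 a))

/-- outer right: `(x⊗y⊗z) · b = x⊗y⊗(z*b)`. -/
noncomputable def slot3R (b : V) : (V ⊗[𝔽] V) ⊗[𝔽] V →ₗ[𝔽] (V ⊗[𝔽] V) ⊗[𝔽] V :=
  LinearMap.lTensor (V ⊗[𝔽] V) (LinearMap.mulRight 𝔽 b)

variable {𝔽 V}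

/-- The triple bracket `{{a,b,c}}`. -/
noncomputable def triple (Br : V →ₗ[𝔽] V →ₗ[𝔽] V ⊗[𝔽] V) (a b c : V) :
    (V ⊗[𝔽] V) ⊗[𝔽] V :=
  brL Br a (Br b c) + sigma3 𝔽 V (brL Br b (Br c a)) +
    sigma3 𝔽 V (sigma3 𝔽 V (brL Br c (Br a b)))

variable (𝔽 V)

/-- Skewsymmetry of a 2-fold bracket. -/
def IsSkew (Br : V →ₗ[𝔽] V →ₗ[𝔽] V ⊗[𝔽] V) : Prop :=
  ∀ a b : V, Br a b = - swap2 𝔽 V (Br b a)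

/-- The span of commutators `[V,V]`. -/
def commSub : Submodule 𝔽 V := Submodule.span 𝔽 {x : V | ∃ a b : V, x = a * b - b * a}

variable {𝔽 V}

/-- The associated bracket `{a,b} = m {{a,b}}`. -/
noncomputable def sb (Br : V →ₗ[𝔽] V →ₗ[𝔽] V ⊗[𝔽] V) (a b : V) : V :=
  LinearMap.mul' 𝔽 V (Br a b)

/-- A 2-fold derivation: `D(ab) = (Da)·b + a·(Db)`. -/
def Is2Deriv (D : V →ₗ[𝔽] V ⊗[𝔽] V) : Prop :=
  ∀ a b : V, D (a * b) = ract2 𝔽 V b (D a) + lact2 𝔽 V a (D b)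

/-- `D` and `E` strongly commute: `D_L ∘ E = E_R ∘ D`. -/
def StronglyComm (D E : V →ₗ[𝔽] V ⊗[𝔽] V) : Prop :=
  ∀ f : V, LinearMap.rTensor V D (E f) =
    (TensorProduct.assoc 𝔽 V V V).symm (LinearMap.lTensor V E (D f))


section Aux5

variable {𝔽 : Type} [Field 𝔽] {V : Type} [Ring V] [Algebra 𝔽 V]

/-- cross w B = w' ⊗ (w'' * B') ⊗ B''  -/
noncomputable def crossX : V ⊗[𝔽] V →ₗ[𝔽] V ⊗[𝔽] V →ₗ[𝔽] (V ⊗[𝔽] V) ⊗[𝔽] V :=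
  (LinearMap.rTensorHom V) ∘ₗ ((LinearMap.lTensorHom V ∘ₗ (LinearMap.mul 𝔽 V).flip).flip)

lemma mul_flip_eq (p : V) : (LinearMap.mul 𝔽 V).flip p = LinearMap.mulRight 𝔽 p := by
  ext a; simp

lemma crossX_tmul (w : V ⊗[𝔽] V) (p q : V) :
    crossX w (p ⊗ₜ[𝔽] q) = (ract2 𝔽 V p w) ⊗ₜ q := by
  simp [crossX, ract2, mul_flip_eq]

lemma swap2_swap2 (z : V ⊗[𝔽] V) : swap2 𝔽 V (swap2 𝔽 V z) = z := by
  induction z using TensorProduct.induction_on with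
  | zero => simp
  | tmul u v => simp
  | add u v hu hv => simp [hu, hv]

lemma sigma3_tmul (u v w : V) :
    sigma3 𝔽 V ((u ⊗ₜ[𝔽] v) ⊗ₜ w) = (w ⊗ₜ[𝔽] u) ⊗ₜ v := by
  simp [sigma3]

end Aux5
section Aux6

variable {𝔽 : Type} [Field 𝔽] {V : Type} [Ring V] [Algebra 𝔽 V]

lemma S1 (p q : V) (w : V ⊗[𝔽] V) :
    sigma3 𝔽 V ((lact2 𝔽 V p w) ⊗ₜ q) = crossX (q ⊗ₜ[𝔽] p) w := by
  induction w using TensorProduct.induction_on with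
  | zero => simp
  | tmul u v => simp [lact2, sigma3, crossX, mul_flip_eq]
  | add u v hu hv => simp [map_add, TensorProduct.add_tmul, hu, hv]

lemma S2 (y q : V) (w : V ⊗[𝔽] V) :
    sigma3 𝔽 V ((ract2 𝔽 V y w) ⊗ₜ q) = slot3R 𝔽 V y (sigma3 𝔽 V (w ⊗ₜ q)) := by
  induction w using TensorProduct.induction_on with
  | zero => simp
  | tmul u v => simp [ract2, sigma3, slot3R]
  | add u v hu hv => simp [map_add, TensorProduct.add_tmul, hu, hv]

lemma S3 (x q : V) (w : V ⊗[𝔽] V) :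
    sigma3 𝔽 V (w ⊗ₜ (x * q)) = slot1L 𝔽 V x (sigma3 𝔽 V (w ⊗ₜ q)) := by
  induction w using TensorProduct.induction_on with
  | zero => simp
  | tmul u v => simp [sigma3, slot1L]
  | add u v hu hv => simp [map_add, TensorProduct.add_tmul, hu, hv]

lemma S4 (y q : V) (w : V ⊗[𝔽] V) :
    sigma3 𝔽 V (sigma3 𝔽 V ((star1r 𝔽 V y w) ⊗ₜ q)) =
      slot3R 𝔽 V y (sigma3 𝔽 V (sigma3 𝔽 V (w ⊗ₜ q))) := by
  induction w using TensorProduct.induction_on with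
  | zero => simp
  | tmul u v => simp [star1r, sigma3, slot3R]
  | add u v hu hv => simp [map_add, TensorProduct.add_tmul, hu, hv]

lemma S5 (x q : V) (w : V ⊗[𝔽] V) :
    sigma3 𝔽 V (sigma3 𝔽 V ((star1l 𝔽 V x w) ⊗ₜ q)) =
      slot1L 𝔽 V x (sigma3 𝔽 V (sigma3 𝔽 V (w ⊗ₜ q))) := by
  induction w using TensorProduct.induction_on with
  | zero => simp
  | tmul u v => simp [star1l, sigma3, slot1L]
  | add u v hu hv => simp [map_add, TensorProduct.add_tmul, hu, hv]

lemma S6 (x q : V) (w : V ⊗[𝔽] V) :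
    slot1L 𝔽 V x (w ⊗ₜ q) = (lact2 𝔽 V x w) ⊗ₜ q := by
  simp [slot1L, lact2]

end Aux6
section Aux7

variable {𝔽 : Type} [Field 𝔽] {V : Type} [Ring V] [Algebra 𝔽 V]

lemma T1a (D : V →ₗ[𝔽] V ⊗[𝔽] V) (y : V) (B : V ⊗[𝔽] V) :
    LinearMap.rTensor V D (ract2 𝔽 V y B) = slot3R 𝔽 V y (LinearMap.rTensor V D B) := by
  induction B using TensorProduct.induction_on with
  | zero => simp
  | tmul p q => simp [ract2, slot3R]
  | add u v hu hv => simp [map_add, hu, hv]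

lemma T1b {Br : V →ₗ[𝔽] V →ₗ[𝔽] V ⊗[𝔽] V}
    (hL : ∀ a b c : V, Br a (b * c) = ract2 𝔽 V c (Br a b) + lact2 𝔽 V b (Br a c))
    (a x : V) (B : V ⊗[𝔽] V) :
    LinearMap.rTensor V (Br a) (lact2 𝔽 V x B) =
      slot1L 𝔽 V x (LinearMap.rTensor V (Br a) B) + crossX (Br a x) B := by
  induction B using TensorProduct.induction_on with
  | zero => simp
  | tmul p q =>
      have : lact2 𝔽 V x (p ⊗ₜ[𝔽] q) = (x * p) ⊗ₜ q := by simp [lact2]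
      rw [this, LinearMap.rTensor_tmul, hL a x p, TensorProduct.add_tmul,
        LinearMap.rTensor_tmul, S6, crossX_tmul]
      abel
  | add u v hu hv => simp only [map_add, LinearMap.add_apply, hu, hv] <;> abel

lemma T2a {Br : V →ₗ[𝔽] V →ₗ[𝔽] V ⊗[𝔽] V}
    (hL : ∀ a b c : V, Br a (b * c) = ract2 𝔽 V c (Br a b) + lact2 𝔽 V b (Br a c))
    (b y : V) (A : V ⊗[𝔽] V) :
    sigma3 𝔽 V (LinearMap.rTensor V (Br b) (star1r 𝔽 V y A)) =
      slot3R 𝔽 V y (sigma3 𝔽 V (LinearMap.rTensor V (Br b) A)) +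
        crossX (swap2 𝔽 V A) (Br b y) := by
  induction A using TensorProduct.induction_on with
  | zero => simp
  | tmul p q =>
      have h1 : star1r 𝔽 V y (p ⊗ₜ[𝔽] q) = (p * y) ⊗ₜ q := by simp [star1r]
      have h2 : swap2 𝔽 V (p ⊗ₜ[𝔽] q) = q ⊗ₜ p := by simp
      rw [h1, h2, LinearMap.rTensor_tmul, hL b p y, TensorProduct.add_tmul,
        map_add, S2, S1, LinearMap.rTensor_tmul]
  | add u v hu hv => simp only [map_add, LinearMap.add_apply, hu, hv] <;> abel

lemma T2b (D : V →ₗ[𝔽] V ⊗[𝔽] V) (x : V) (A : V ⊗[𝔽] V) :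
    sigma3 𝔽 V (LinearMap.rTensor V D (star1l 𝔽 V x A)) =
      slot1L 𝔽 V x (sigma3 𝔽 V (LinearMap.rTensor V D A)) := by
  induction A using TensorProduct.induction_on with
  | zero => simp
  | tmul p q =>
      have h1 : star1l 𝔽 V x (p ⊗ₜ[𝔽] q) = p ⊗ₜ (x * q) := by simp [star1l]
      rw [h1, LinearMap.rTensor_tmul, S3, LinearMap.rTensor_tmul]
  | add u v hu hv => simp only [map_add, LinearMap.add_apply, hu, hv] <;> abel

lemma T3 {Br : V →ₗ[𝔽] V →ₗ[𝔽] V ⊗[𝔽] V}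
    (hR : ∀ a b c : V, Br (a * b) c = star1r 𝔽 V b (Br a c) + star1l 𝔽 V a (Br b c))
    (x y : V) (C : V ⊗[𝔽] V) :
    sigma3 𝔽 V (sigma3 𝔽 V (LinearMap.rTensor V (Br (x * y)) C)) =
      slot3R 𝔽 V y (sigma3 𝔽 V (sigma3 𝔽 V (LinearMap.rTensor V (Br x) C))) +
        slot1L 𝔽 V x (sigma3 𝔽 V (sigma3 𝔽 V (LinearMap.rTensor V (Br y) C))) := by
  induction C using TensorProduct.induction_on with
  | zero => simp
  | tmul p q =>
      rw [LinearMap.rTensor_tmul, hR x y p, TensorProduct.add_tmul, map_add, map_add,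
        S4, S5, LinearMap.rTensor_tmul, LinearMap.rTensor_tmul]
  | add u v hu hv => simp only [map_add, LinearMap.add_apply, hu, hv] <;> abel

end Aux7
section Aux8

variable {𝔽 : Type} [Field 𝔽] {V : Type} [Ring V] [Algebra 𝔽 V]

lemma sigma3_cube (X : (V ⊗[𝔽] V) ⊗[𝔽] V) :
    sigma3 𝔽 V (sigma3 𝔽 V (sigma3 𝔽 V X)) = X := by
  have h : ((sigma3 𝔽 V).toLinearMap ∘ₗ (sigma3 𝔽 V).toLinearMap ∘ₗ
      (sigma3 𝔽 V).toLinearMap) = LinearMap.id :=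
    TensorProduct.ext_threefold fun u v w => by simp [sigma3]
  simpa using LinearMap.congr_fun h X

lemma K1 (x : V) (X : (V ⊗[𝔽] V) ⊗[𝔽] V) :
    sigma3 𝔽 V (slot1L 𝔽 V x X) = slot2L 𝔽 V x (sigma3 𝔽 V X) := by
  have h : ((sigma3 𝔽 V).toLinearMap ∘ₗ slot1L 𝔽 V x) =
      (slot2L 𝔽 V x ∘ₗ (sigma3 𝔽 V).toLinearMap) :=
    TensorProduct.ext_threefold fun u v w => by simp [sigma3, slot1L, slot2L]
  simpa using LinearMap.congr_fun h X

lemma K2 (y : V) (X : (V ⊗[𝔽] V) ⊗[𝔽] V) :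
    sigma3 𝔽 V (slot3R 𝔽 V y X) = slot1R 𝔽 V y (sigma3 𝔽 V X) := by
  have h : ((sigma3 𝔽 V).toLinearMap ∘ₗ slot3R 𝔽 V y) =
      (slot1R 𝔽 V y ∘ₗ (sigma3 𝔽 V).toLinearMap) :=
    TensorProduct.ext_threefold fun u v w => by simp [sigma3, slot3R, slot1R]
  simpa using LinearMap.congr_fun h X

lemma K3 (x : V) (X : (V ⊗[𝔽] V) ⊗[𝔽] V) :
    sigma3 𝔽 V (slot2L 𝔽 V x X) = slot3L 𝔽 V x (sigma3 𝔽 V X) := by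
  have h : ((sigma3 𝔽 V).toLinearMap ∘ₗ slot2L 𝔽 V x) =
      (slot3L 𝔽 V x ∘ₗ (sigma3 𝔽 V).toLinearMap) :=
    TensorProduct.ext_threefold fun u v w => by simp [sigma3, slot2L, slot3L]
  simpa using LinearMap.congr_fun h X

lemma K4 (y : V) (X : (V ⊗[𝔽] V) ⊗[𝔽] V) :
    sigma3 𝔽 V (slot1R 𝔽 V y X) = slot2R 𝔽 V y (sigma3 𝔽 V X) := by
  have h : ((sigma3 𝔽 V).toLinearMap ∘ₗ slot1R 𝔽 V y) =
      (slot2R 𝔽 V y ∘ₗ (sigma3 𝔽 V).toLinearMap) :=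
    TensorProduct.ext_threefold fun u v w => by simp [sigma3, slot1R, slot2R]
  simpa using LinearMap.congr_fun h X

lemma triple_cyc (Br : V →ₗ[𝔽] V →ₗ[𝔽] V ⊗[𝔽] V) (a b c : V) :
    triple Br a b c = sigma3 𝔽 V (triple Br b c a) := by
  unfold triple
  rw [map_add, map_add, sigma3_cube]
  abel

lemma rule3 (Br : V →ₗ[𝔽] V →ₗ[𝔽] V ⊗[𝔽] V) (hBr : IsDoubleBracket 𝔽 V Br)
    (hskew : IsSkew 𝔽 V Br) (a b x y : V) :
    triple Br a b (x * y) =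
      slot1L 𝔽 V x (triple Br a b y) + slot3R 𝔽 V y (triple Br a b x) := by
  obtain ⟨hL, hR⟩ := hBr
  have e1 : brL Br a (Br b (x * y)) =
      slot3R 𝔽 V y (brL Br a (Br b x)) +
        (slot1L 𝔽 V x (brL Br a (Br b y)) + crossX (Br a x) (Br b y)) := by
    rw [hL b x y, map_add]
    rw [show brL Br a = LinearMap.rTensor V (Br a) from rfl, T1a, T1b hL]
  have e2 : sigma3 𝔽 V (brL Br b (Br (x * y) a)) =
      (slot3R 𝔽 V y (sigma3 𝔽 V (brL Br b (Br x a))) + crossX (swap2 𝔽 V (Br x a)) (Br b y)) +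
        slot1L 𝔽 V x (sigma3 𝔽 V (brL Br b (Br y a))) := by
    rw [hR x y a, map_add, map_add]
    rw [show brL Br b = LinearMap.rTensor V (Br b) from rfl, T2a hL, T2b]
  have e3 : sigma3 𝔽 V (sigma3 𝔽 V (brL Br (x * y) (Br a b))) =
      slot3R 𝔽 V y (sigma3 𝔽 V (sigma3 𝔽 V (brL Br x (Br a b)))) +
        slot1L 𝔽 V x (sigma3 𝔽 V (sigma3 𝔽 V (brL Br y (Br a b)))) := by
    rw [show brL Br (x * y) = LinearMap.rTensor V (Br (x * y)) from rfl, T3 hR]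
    rfl
  have ecross : crossX (swap2 𝔽 V (Br x a)) (Br b y) = - crossX (Br a x) (Br b y) := by
    rw [hskew x a, map_neg, swap2_swap2, map_neg, LinearMap.neg_apply]
  unfold triple
  rw [e1, e2, e3, ecross, map_add, map_add, map_add, map_add]
  abel

end Aux8

/-- for a skewsymmetric 2-fold bracket, the triple bracket
`{{a,b,c}} = {{a,{{b,c}}}}_L + ({{b,{{c,a}}}}_L)^σ + ({{c,{{a,b}}}}_L)^{σ²}`
is a 3-fold bracket, i.e. it satisfies the Leibniz rules in each slot. -/
theorem statement_5 (𝔽 : Type) [Field 𝔽] [CharZero 𝔽] (V : Type) [Ring V] [Algebra 𝔽 V]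
    (Br : V →ₗ[𝔽] V →ₗ[𝔽] V ⊗[𝔽] V) (hBr : IsDoubleBracket 𝔽 V Br)
    (hskew : IsSkew 𝔽 V Br) :
    (∀ b c x y : V, triple Br (x * y) b c =
        slot2L 𝔽 V x (triple Br y b c) + slot1R 𝔽 V y (triple Br x b c)) ∧
    (∀ a c x y : V, triple Br a (x * y) c =
        slot3L 𝔽 V x (triple Br a y c) + slot2R 𝔽 V y (triple Br a x c)) ∧
    (∀ a b x y : V, triple Br a b (x * y) =
        slot1L 𝔽 V x (triple Br a b y) + slot3R 𝔽 V y (triple Br a b x)) := by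
  have r3 : ∀ a b x y : V, triple Br a b (x * y) =
      slot1L 𝔽 V x (triple Br a b y) + slot3R 𝔽 V y (triple Br a b x) :=
    fun a b x y => rule3 Br hBr hskew a b x y
  have r1 : ∀ b c x y : V, triple Br (x * y) b c =
      slot2L 𝔽 V x (triple Br y b c) + slot1R 𝔽 V y (triple Br x b c) := by
    intro b c x y
    rw [triple_cyc Br (x * y) b c, r3 b c x y, map_add, K1, K2,
      ← triple_cyc Br y b c, ← triple_cyc Br x b c]
  have r2 : ∀ a c x y : V, triple Br a (x * y) c =
      slot3L 𝔽 V x (triple Br a y c) + slot2R 𝔽 V y (triple Br a x c) := by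
    intro a c x y
    rw [triple_cyc Br a (x * y) c, r1 c a x y, map_add, K3, K4,
      ← triple_cyc Br a y c, ← triple_cyc Br a x c]
  exact ⟨r1, r2, r3⟩
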